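/- Let n ≥ 2 and N ≥ 1, and let (J_{ij})_{1≤i<j≤N} be real numbers with J_{ij} ≥ 0 (ferromagnetic couplings). If f belongs to the cone 𝓔, then ∫ f(σ_1,…,σ_N) exp(Σ_{1≤i<j≤N} J_{ij} σ_i·σ_j) dσ_1⋯dσ_N ≥ 0 (first Griffiths inequality with ferromagnetic interaction). -/

import Mathlib

open MeasureTheory RealInnerProductSpace Metric Set
open scoped ENNReal Pointwise

/-- The normalized (uniform probability) measure on the unit sphere `S^{n-1} ⊂ ℝ^n`. -/
noncomputable def sphereUniform (n : ℕ) :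
    Measure (Metric.sphere (0 : EuclideanSpace ℝ (Fin n)) 1) :=
  ((volume : Measure (EuclideanSpace ℝ (Fin n))).toSphere Set.univ)⁻¹ •
    (volume : Measure (EuclideanSpace ℝ (Fin n))).toSphere

/-- The product measure `dσ₁ ⋯ dσ_N` of `N` copies of the normalized uniform measure. -/
noncomputable def spinMeasure (n N : ℕ) :
    Measure (Fin N → Metric.sphere (0 : EuclideanSpace ℝ (Fin n)) 1) :=
  Measure.pi fun _ => sphereUniform n

/-- The cone `𝓔` of finite linear combinations with nonnegative coefficients of monomials
`∏_{1 ≤ i < j ≤ N} (σ_i · σ_j)^{n_{ij}}`. -/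
def InCone (n N : ℕ)
    (f : (Fin N → Metric.sphere (0 : EuclideanSpace ℝ (Fin n)) 1) → ℝ) : Prop :=
  ∃ (K : ℕ) (c : Fin K → ℝ) (e : Fin K → Fin N → Fin N → ℕ),
    (∀ k, 0 ≤ c k) ∧
    ∀ σ, f σ = ∑ k, c k *
      ∏ p ∈ Finset.univ.filter (fun p : Fin N × Fin N => p.1 < p.2),
        (⟪(σ p.1 : EuclideanSpace ℝ (Fin n)), (σ p.2 : EuclideanSpace ℝ (Fin n))⟫ : ℝ)
          ^ e k p.1 p.2

lemma sphereUniform_prob (n : ℕ) (hn : 1 ≤ n) : IsProbabilityMeasure (sphereUniform n) := by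
  constructor
  rw [sphereUniform, Measure.smul_apply, smul_eq_mul]
  refine ENNReal.inv_mul_cancel ?_ (measure_ne_top _ _)
  haveI : Nonempty (Fin n) := ⟨⟨0, hn⟩⟩
  haveI : Nontrivial (EuclideanSpace ℝ (Fin n)) := inferInstance
  rw [Measure.toSphere_apply_univ]
  have h1 : (0:ℝ≥0∞) < volume (Metric.ball (0 : EuclideanSpace ℝ (Fin n)) 1) :=
    Metric.measure_ball_pos _ _ one_pos
  have h2 : 0 < Module.finrank ℝ (EuclideanSpace ℝ (Fin n)) := Module.finrank_pos
  exact mul_ne_zero (by exact_mod_cast h2.ne') h1.ne'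
variable {n : ℕ}

local notation "Esp" n => EuclideanSpace ℝ (Fin n)

/-- Reflection negating coordinate `a`. -/
noncomputable def negCoord (n : ℕ) (a : Fin n) :
    (Esp n) ≃ₗᵢ[ℝ] (Esp n) := by
  refine LinearIsometryEquiv.mk
    (LinearEquiv.ofInvolutive
      { toFun := fun x => WithLp.toLp 2 (fun i => if i = a then -(x i) else x i : Fin n → ℝ)
        map_add' := ?_
        map_smul' := ?_ } ?_) ?_
  · intro x y; ext i; by_cases h : i = a <;>
      simp [h, PiLp.add_apply] <;> ring
  · intro c x; ext i; by_cases h : i = a <;>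
      simp [h, PiLp.smul_apply, smul_eq_mul] <;> ring
  · intro x; ext i; by_cases h : i = a <;> simp [h]
  · intro x
    rw [EuclideanSpace.norm_eq, EuclideanSpace.norm_eq]
    congr 1
    refine Finset.sum_congr rfl fun i _ => ?_
    by_cases h : i = a <;> simp [h]

lemma negCoord_apply (a : Fin n) (x : Esp n) (i : Fin n) :
    negCoord n a x i = if i = a then -(x i) else x i := rfl

/-- The measurable equivalence of the unit sphere induced by a linear isometry. -/
noncomputable def sphereMapE (e : (Esp n) ≃ₗᵢ[ℝ] (Esp n)) :
    (sphere (0 : Esp n) 1) ≃ᵐ (sphere (0 : Esp n) 1) where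
  toEquiv := Equiv.subtypeEquiv e.toEquiv (fun x => by
    simp only [mem_sphere_zero_iff_norm]
    rw [show ‖e.toEquiv x‖ = ‖x‖ from e.norm_map x])
  measurable_toFun := (Continuous.subtype_mk
    (e.continuous.comp continuous_subtype_val) _).measurable
  measurable_invFun := (Continuous.subtype_mk
    (e.symm.continuous.comp continuous_subtype_val) _).measurable

lemma sphereMapE_coe (e : (Esp n) ≃ₗᵢ[ℝ] (Esp n)) (x : sphere (0 : Esp n) 1) :
    ((sphereMapE e x : sphere (0 : Esp n) 1) : Esp n) = e (x : Esp n) := rfl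

lemma map_toSphere (e : (Esp n) ≃ₗᵢ[ℝ] (Esp n)) :
    Measure.map (sphereMapE e) (volume : Measure (Esp n)).toSphere
      = (volume : Measure (Esp n)).toSphere := by
  refine Measure.ext fun s hs => ?_
  rw [MeasurableEquiv.map_apply]
  rw [Measure.toSphere_apply' _ ((sphereMapE e).measurableSet_preimage.2 hs),
    Measure.toSphere_apply' _ hs]
  congr 1
  have hset : (Ioo (0:ℝ) 1 • ((↑) '' ((sphereMapE e) ⁻¹' s)))
      = e ⁻¹' (Ioo (0:ℝ) 1 • ((↑) '' s)) := by
    ext x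
    constructor
    · rintro ⟨r, hr, y, ⟨σ, hσ, rfl⟩, rfl⟩
      exact ⟨r, hr, _, ⟨sphereMapE e σ, hσ, rfl⟩, by simp [sphereMapE_coe]⟩
    · rintro ⟨r, hr, y, ⟨τ, hτ, rfl⟩, hx⟩
      refine ⟨r, hr, (sphereMapE e).symm τ, ⟨(sphereMapE e).symm τ, by simp [hτ], rfl⟩, ?_⟩
      have : (((sphereMapE e).symm τ : sphere (0 : Esp n) 1) : Esp n) = e.symm (τ : Esp n) := rfl
      rw [this]
      apply e.injective
      rw [← hx]
      simp
  rw [hset]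
  have h1 : volume (⇑e ⁻¹' (Ioo (0:ℝ) 1 • ((↑) '' s)))
      = Measure.map e.toMeasurableEquiv volume (Ioo (0:ℝ) 1 • ((↑) '' s)) :=
    (MeasurableEquiv.map_apply e.toMeasurableEquiv _).symm
  rw [h1]
  have h2 : Measure.map (⇑e.toMeasurableEquiv) (volume : Measure (Esp n)) = volume := by
    simp only [LinearIsometryEquiv.coe_toMeasurableEquiv]
    exact e.measurePreserving.map_eq
  rw [h2]
lemma map_sphereUniform (e : (Esp n) ≃ₗᵢ[ℝ] (Esp n)) :
    Measure.map (sphereMapE e) (sphereUniform n) = sphereUniform n := by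
  rw [sphereUniform, Measure.map_smul, map_toSphere]

lemma integral_sphereUniform_comp (e : (Esp n) ≃ₗᵢ[ℝ] (Esp n))
    (g : (sphere (0 : Esp n) 1) → ℝ) :
    ∫ x, g (sphereMapE e x) ∂(sphereUniform n) = ∫ x, g x ∂(sphereUniform n) := by
  rw [← integral_map_equiv (sphereMapE e) g, map_sphereUniform]

/-- Lemma A: sphere moments are nonnegative. -/
lemma sphere_moment_nonneg (n : ℕ) (m : Fin n → ℕ) :
    0 ≤ ∫ x : sphere (0 : Esp n) 1, ∏ a, ((x : Esp n) a) ^ (m a) ∂(sphereUniform n) := by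
  by_cases hev : ∀ a, Even (m a)
  · refine integral_nonneg fun x => Finset.prod_nonneg fun a _ => (hev a).pow_nonneg _
  · push_neg at hev
    obtain ⟨a, ha⟩ := hev
    have hodd : Odd (m a) := Nat.odd_iff.2 (Nat.not_even_iff.1 ha)
    have key : ∫ x : sphere (0 : Esp n) 1, ∏ b, ((x : Esp n) b) ^ (m b) ∂(sphereUniform n)
        = - ∫ x : sphere (0 : Esp n) 1, ∏ b, ((x : Esp n) b) ^ (m b) ∂(sphereUniform n) := by
      conv_lhs => rw [← integral_sphereUniform_comp (negCoord n a)]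
      rw [← integral_neg]
      refine integral_congr_ae (Filter.Eventually.of_forall fun x => ?_)
      have hx : ∀ b, ((sphereMapE (negCoord n a) x : sphere (0 : Esp n) 1) : Esp n) b
          = if b = a then -((x : Esp n) b) else (x : Esp n) b := fun b => rfl
      simp only [hx]
      have : ∀ b : Fin n, (if b = a then -((x : Esp n) b) else (x : Esp n) b) ^ (m b)
          = ((if b = a then (-1:ℝ) else 1) ^ (m b)) * ((x : Esp n) b) ^ (m b) := by
        intro b
        by_cases h : b = a
        · simp only [if_pos h]
          rw [neg_pow]
        · simp [if_neg h]
      rw [Finset.prod_congr rfl fun b _ => this b, Finset.prod_mul_distrib]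
      have h2 : (∏ b : Fin n, (if b = a then (-1:ℝ) else 1) ^ (m b)) = (-1:ℝ) ^ (m a) := by
        have h3 : ∀ b : Fin n, (if b = a then (-1:ℝ) else 1) ^ (m b)
            = (if b = a then ((-1:ℝ) ^ (m b)) else 1) := by
          intro b; by_cases h : b = a <;> simp [h]
        rw [Finset.prod_congr rfl fun b _ => h3 b]
        simp [Finset.prod_ite_eq']
      rw [h2, hodd.neg_one_pow]
      ring
    linarith [key]
section Spin
variable {n N : ℕ}

local notation "Sph" n => Metric.sphere (0 : EuclideanSpace ℝ (Fin n)) 1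

/-- Generalized coordinate monomial. -/
def Mono (n N : ℕ) (m : Fin N → Fin n → ℕ) (σ : Fin N → Sph n) : ℝ :=
  ∏ i, ∏ a, ((σ i : Esp n) a) ^ (m i a)

lemma spinMeasure_prob (hn : 1 ≤ n) : IsProbabilityMeasure (spinMeasure n N) := by
  haveI := sphereUniform_prob n hn
  rw [spinMeasure]
  infer_instance

lemma cont_coord (i : Fin N) (a : Fin n) :
    Continuous fun σ : Fin N → Sph n => ((σ i : Esp n) a) :=
  (EuclideanSpace.proj a).continuous.comp
    (continuous_subtype_val.comp (continuous_apply i))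

lemma cont_mono (m : Fin N → Fin n → ℕ) : Continuous (Mono n N m) := by
  refine continuous_finset_prod _ fun i _ => continuous_finset_prod _ fun a _ => ?_
  exact (cont_coord i a).pow _

lemma cont_inner (i j : Fin N) :
    Continuous fun σ : Fin N → Sph n => (⟪(σ i : Esp n), (σ j : Esp n)⟫ : ℝ) :=
  Continuous.inner (continuous_subtype_val.comp (continuous_apply i))
    (continuous_subtype_val.comp (continuous_apply j))

lemma integrable_cont (hn : 1 ≤ n) (g : (Fin N → Sph n) → ℝ) (hg : Continuous g) :
    Integrable g (spinMeasure n N) := by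
  haveI := spinMeasure_prob (N := N) hn
  refine hg.integrable_of_hasCompactSupport ?_
  exact IsCompact.of_isClosed_subset isCompact_univ (isClosed_tsupport g) (Set.subset_univ _)

lemma inner_expand (σ : Fin N → Sph n) (i j : Fin N) :
    (⟪(σ i : Esp n), (σ j : Esp n)⟫ : ℝ) = ∑ a, (σ i : Esp n) a * (σ j : Esp n) a := by
  rw [PiLp.inner_apply]
  simp [RCLike.inner_apply]
  exact Finset.sum_congr rfl fun _ _ => mul_comm _ _

/-- Claim D : integrals of generalized monomials are nonnegative. -/
lemma monoD (hn : 1 ≤ n) (m : Fin N → Fin n → ℕ) :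
    0 ≤ ∫ σ, Mono n N m σ ∂spinMeasure n N := by
  letI : MeasureSpace (Sph n) := ⟨sphereUniform n⟩
  haveI : IsProbabilityMeasure (volume : Measure (Sph n)) := sphereUniform_prob n hn
  have hvol : spinMeasure n N = (volume : Measure (Fin N → Sph n)) := by
    rw [volume_pi]; rfl
  rw [hvol]
  have key := MeasureTheory.integral_fintype_prod_eq_prod (𝕜 := ℝ) (ι := Fin N)
    (fun i (x : Sph n) => ∏ a, ((x : Esp n) a) ^ (m i a)) (μ := fun _ => (volume : Measure (Sph n)))
  rw [← volume_pi] at key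
  rw [show (fun σ : Fin N → Sph n => Mono n N m σ)
      = fun σ : Fin N → Sph n => ∏ i, (fun i (x : Sph n) => ∏ a, ((x : Esp n) a) ^ (m i a)) i (σ i)
      from rfl, key]
  exact Finset.prod_nonneg fun i _ => sphere_moment_nonneg n (m i)

end Spin
section Spin2
variable {n N : ℕ}

local notation "Sph" n => Metric.sphere (0 : EuclideanSpace ℝ (Fin n)) 1

def bump (m : Fin N → Fin n → ℕ) (i j : Fin N) (a : Fin n) : Fin N → Fin n → ℕ :=
  fun i' a' => m i' a' + (if i' = i ∧ a' = a then 1 else 0) + (if i' = j ∧ a' = a then 1 else 0)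

lemma prod_prod_ite (x : Fin N → Fin n → ℝ) (i : Fin N) (a : Fin n) :
    (∏ i', ∏ a', (x i' a') ^ (if i' = i ∧ a' = a then 1 else 0)) = x i a := by
  have h1 : ∀ i' a', (x i' a') ^ (if i' = i ∧ a' = a then 1 else 0)
      = (if i' = i ∧ a' = a then x i' a' else 1) := by
    intro i' a'; split <;> simp
  simp only [h1]
  have h2 : ∀ i', (∏ a', (if i' = i ∧ a' = a then x i' a' else 1))
      = (if i' = i then x i' a else 1) := by
    intro i'
    by_cases h : i' = i
    · subst h
      simp only [true_and, if_pos rfl]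
      simpa using Finset.prod_ite_eq' Finset.univ a fun a' => x i' a'
    · simp [h]
  simp only [h2]
  simpa using Finset.prod_ite_eq' Finset.univ i fun i' => x i' a

lemma bump_mono (m : Fin N → Fin n → ℕ) (i j : Fin N) (a : Fin n) (σ : Fin N → Sph n) :
    Mono n N (bump m i j a) σ
      = Mono n N m σ * (((σ i : Esp n) a) * ((σ j : Esp n) a)) := by
  unfold Mono bump
  simp only [pow_add, Finset.prod_mul_distrib]
  rw [prod_prod_ite (fun i' a' => ((σ i' : Esp n) a')) i a,
    prod_prod_ite (fun i' a' => ((σ i' : Esp n) a')) j a]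
  ring

lemma integral_bump_step (hn : 1 ≤ n) (i j : Fin N) (X : (Fin N → Sph n) → ℝ)
    (hX : Continuous X)
    (H : ∀ m', 0 ≤ ∫ σ, Mono n N m' σ * X σ ∂spinMeasure n N) (m : Fin N → Fin n → ℕ) :
    0 ≤ ∫ σ, Mono n N m σ * ((⟪(σ i : Esp n), (σ j : Esp n)⟫ : ℝ) * X σ)
        ∂spinMeasure n N := by
  have hpt : ∀ σ : Fin N → Sph n,
      Mono n N m σ * ((⟪(σ i : Esp n), (σ j : Esp n)⟫ : ℝ) * X σ)
        = ∑ a, Mono n N (bump m i j a) σ * X σ := by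
    intro σ
    rw [inner_expand]
    rw [Finset.sum_mul, Finset.mul_sum]
    exact Finset.sum_congr rfl fun a _ => by rw [bump_mono]; ring
  rw [integral_congr_ae (Filter.Eventually.of_forall hpt)]
  rw [integral_finset_sum _ (fun a _ =>
    integrable_cont hn (fun σ => Mono n N (bump m i j a) σ * X σ) ((cont_mono _).mul hX))]
  exact Finset.sum_nonneg fun a _ => H _

noncomputable def pairEnergy (n N : ℕ) (J : Fin N → Fin N → ℝ) (σ : Fin N → Sph n) : ℝ :=
  ∑ p ∈ Finset.univ.filter (fun p : Fin N × Fin N => p.1 < p.2),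
    J p.1 p.2 * (⟪(σ p.1 : Esp n), (σ p.2 : Esp n)⟫ : ℝ)

lemma cont_energy (J : Fin N → Fin N → ℝ) : Continuous (pairEnergy n N J) :=
  continuous_finset_sum _ fun p _ => (continuous_const.mul (cont_inner p.1 p.2))

lemma claimJ (hn : 1 ≤ n) (J : Fin N → Fin N → ℝ) (hJ : ∀ i j, 0 ≤ J i j) :
    ∀ (k : ℕ) (m : Fin N → Fin n → ℕ),
      0 ≤ ∫ σ, Mono n N m σ * (pairEnergy n N J σ) ^ k ∂spinMeasure n N := by
  intro k
  induction k with
  | zero => intro m; simpa using monoD hn m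
  | succ k ih =>
    intro m
    have hpt : ∀ σ : Fin N → Sph n,
        Mono n N m σ * (pairEnergy n N J σ) ^ (k + 1)
          = ∑ p ∈ Finset.univ.filter (fun p : Fin N × Fin N => p.1 < p.2),
              J p.1 p.2 * (Mono n N m σ *
                ((⟪(σ p.1 : Esp n), (σ p.2 : Esp n)⟫ : ℝ) * (pairEnergy n N J σ) ^ k)) := by
      intro σ
      have haux : ∀ Y : ℝ, Mono n N m σ * (pairEnergy n N J σ * Y)
          = ∑ p ∈ Finset.univ.filter (fun p : Fin N × Fin N => p.1 < p.2),
              J p.1 p.2 * (Mono n N m σ *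
                ((⟪(σ p.1 : Esp n), (σ p.2 : Esp n)⟫ : ℝ) * Y)) := by
        intro Y
        conv_lhs => rw [pairEnergy]
        rw [Finset.sum_mul, Finset.mul_sum]
        exact Finset.sum_congr rfl fun p _ => by ring
      rw [pow_succ']
      exact haux _
    rw [integral_congr_ae (Filter.Eventually.of_forall hpt)]
    rw [integral_finset_sum _ (fun (p : Fin N × Fin N) _ => integrable_cont hn (fun σ => J p.1 p.2 * (Mono n N m σ *
                  ((⟪(σ p.1 : Esp n), (σ p.2 : Esp n)⟫ : ℝ) * (pairEnergy n N J σ) ^ k)))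
      (continuous_const.mul ((cont_mono _).mul
        ((cont_inner p.1 p.2).mul ((cont_energy J).pow k)))))]
    refine Finset.sum_nonneg fun p _ => ?_
    rw [integral_const_mul]
    exact mul_nonneg (hJ p.1 p.2)
      (integral_bump_step hn p.1 p.2 _ ((cont_energy J).pow k) (fun m' => ih m') m)

end Spin2
section Spin3
variable {n N : ℕ}

local notation "Sph" n => Metric.sphere (0 : EuclideanSpace ℝ (Fin n)) 1

lemma claimK (hn : 1 ≤ n) (J : Fin N → Fin N → ℝ) (hJ : ∀ i j, 0 ≤ J i j)
    (s : Finset (Fin N × Fin N)) :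
    ∀ (e : Fin N × Fin N → ℕ) (k : ℕ) (m : Fin N → Fin n → ℕ),
      0 ≤ ∫ σ, Mono n N m σ *
        ((∏ p ∈ s, (⟪(σ p.1 : Esp n), (σ p.2 : Esp n)⟫ : ℝ) ^ e p) *
          (pairEnergy n N J σ) ^ k) ∂spinMeasure n N := by
  induction s using Finset.induction with
  | empty =>
    intro e k m
    simpa only [Finset.prod_empty, one_mul] using claimJ hn J hJ k m
  | @insert p s hp ih =>
    intro e k m
    have cont_rest : Continuous (fun σ : Fin N → Sph n =>
        (∏ q ∈ s, (⟪(σ q.1 : Esp n), (σ q.2 : Esp n)⟫ : ℝ) ^ e q)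
          * (pairEnergy n N J σ) ^ k) :=
      (continuous_finset_prod _ fun q _ => (cont_inner q.1 q.2).pow _).mul
        ((cont_energy J).pow k)
    have inner_ind : ∀ (j : ℕ) (m' : Fin N → Fin n → ℕ),
        0 ≤ ∫ σ, Mono n N m' σ *
          ((⟪(σ p.1 : Esp n), (σ p.2 : Esp n)⟫ : ℝ) ^ j *
            ((∏ q ∈ s, (⟪(σ q.1 : Esp n), (σ q.2 : Esp n)⟫ : ℝ) ^ e q) *
              (pairEnergy n N J σ) ^ k)) ∂spinMeasure n N := by
      intro j
      induction j with
      | zero =>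
        intro m'
        simpa only [pow_zero, one_mul] using ih e k m'
      | succ j ihj =>
        intro m'
        have hpt : ∀ σ : Fin N → Sph n,
            Mono n N m' σ *
              ((⟪(σ p.1 : Esp n), (σ p.2 : Esp n)⟫ : ℝ) ^ (j + 1) *
                ((∏ q ∈ s, (⟪(σ q.1 : Esp n), (σ q.2 : Esp n)⟫ : ℝ) ^ e q) *
                  (pairEnergy n N J σ) ^ k))
            = Mono n N m' σ *
              ((⟪(σ p.1 : Esp n), (σ p.2 : Esp n)⟫ : ℝ) *
                ((⟪(σ p.1 : Esp n), (σ p.2 : Esp n)⟫ : ℝ) ^ j *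
                  ((∏ q ∈ s, (⟪(σ q.1 : Esp n), (σ q.2 : Esp n)⟫ : ℝ) ^ e q) *
                    (pairEnergy n N J σ) ^ k))) := fun σ => by ring
        rw [integral_congr_ae (Filter.Eventually.of_forall hpt)]
        exact integral_bump_step hn p.1 p.2 _
          (((cont_inner p.1 p.2).pow j).mul cont_rest) ihj m'
    have key := inner_ind (e p) m
    have hpt2 : ∀ σ : Fin N → Sph n,
        Mono n N m σ *
          ((∏ q ∈ insert p s, (⟪(σ q.1 : Esp n), (σ q.2 : Esp n)⟫ : ℝ) ^ e q) *
            (pairEnergy n N J σ) ^ k)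
        = Mono n N m σ *
          ((⟪(σ p.1 : Esp n), (σ p.2 : Esp n)⟫ : ℝ) ^ e p *
            ((∏ q ∈ s, (⟪(σ q.1 : Esp n), (σ q.2 : Esp n)⟫ : ℝ) ^ e q) *
              (pairEnergy n N J σ) ^ k)) := by
      intro σ
      rw [Finset.prod_insert hp]
      ring
    rw [integral_congr_ae (Filter.Eventually.of_forall hpt2)]
    exact key

end Spin3
section Spin4
variable {n N : ℕ}

local notation "Sph" n => Metric.sphere (0 : EuclideanSpace ℝ (Fin n)) 1
def pairsF (N : ℕ) : Finset (Fin N × Fin N) :=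
  Finset.filter (fun p : Fin N × Fin N => p.1 < p.2) Finset.univ

lemma mono_zero (σ : Fin N → Sph n) : Mono n N (fun _ _ => 0) σ = 1 := by
  simp [Mono]

lemma norm_sph (x : Sph n) : ‖(x : Esp n)‖ = 1 := mem_sphere_zero_iff_norm.1 x.2

lemma abs_inner_sph (x y : Sph n) : |(⟪(x : Esp n), (y : Esp n)⟫ : ℝ)| ≤ 1 := by
  have := abs_real_inner_le_norm (x : Esp n) (y : Esp n)
  rwa [norm_sph, norm_sph, one_mul] at this

lemma lemL (hn : 1 ≤ n) (J : Fin N → Fin N → ℝ) (hJ : ∀ i j, 0 ≤ J i j)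
    (e : Fin N → Fin N → ℕ) :
    0 ≤ ∫ σ : Fin N → Sph n,
        (∏ p ∈ pairsF N, (⟪(σ p.1 : Esp n), (σ p.2 : Esp n)⟫ : ℝ) ^ e p.1 p.2) *
          Real.exp (pairEnergy n N J σ) ∂spinMeasure n N := by
  haveI := spinMeasure_prob (N := N) hn
  set C : ℝ := ∑ p ∈ pairsF N, J p.1 p.2 with hC
  have cont_mono' : Continuous (fun σ : Fin N → Sph n =>
      ∏ p ∈ pairsF N, (⟪(σ p.1 : Esp n), (σ p.2 : Esp n)⟫ : ℝ) ^ e p.1 p.2) :=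
    continuous_finset_prod _ fun p _ => (cont_inner p.1 p.2).pow _
  have habsmono : ∀ σ : Fin N → Sph n,
      |∏ p ∈ pairsF N, (⟪(σ p.1 : Esp n), (σ p.2 : Esp n)⟫ : ℝ) ^ e p.1 p.2| ≤ 1 := by
    intro σ
    rw [Finset.abs_prod]
    refine Finset.prod_le_one (fun p _ => abs_nonneg _) fun p _ => ?_
    rw [abs_pow]
    exact pow_le_one₀ (abs_nonneg _) (abs_inner_sph _ _)
  have habsP : ∀ σ : Fin N → Sph n, |pairEnergy n N J σ| ≤ C := by
    intro σ
    refine (Finset.abs_sum_le_sum_abs _ _).trans ?_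
    refine Finset.sum_le_sum fun p _ => ?_
    rw [abs_mul, abs_of_nonneg (hJ p.1 p.2)]
    calc J p.1 p.2 * |(⟪(σ p.1 : Esp n), (σ p.2 : Esp n)⟫ : ℝ)|
        ≤ J p.1 p.2 * 1 := by
          exact mul_le_mul_of_nonneg_left (abs_inner_sph _ _) (hJ p.1 p.2)
      _ = J p.1 p.2 := mul_one _
  -- partial sums
  have h1 : ∀ M : ℕ, 0 ≤ ∫ σ : Fin N → Sph n,
      (∏ p ∈ pairsF N, (⟪(σ p.1 : Esp n), (σ p.2 : Esp n)⟫ : ℝ) ^ e p.1 p.2) *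
        (∑ m ∈ Finset.range M, (pairEnergy n N J σ) ^ m / (Nat.factorial m))
        ∂spinMeasure n N := by
    intro M
    have hpt : ∀ σ : Fin N → Sph n,
        (∏ p ∈ pairsF N, (⟪(σ p.1 : Esp n), (σ p.2 : Esp n)⟫ : ℝ) ^ e p.1 p.2) *
          (∑ m ∈ Finset.range M, (pairEnergy n N J σ) ^ m / (Nat.factorial m))
        = ∑ m ∈ Finset.range M, ((Nat.factorial m : ℝ))⁻¹ *
            (Mono n N (fun _ _ => 0) σ *
              ((∏ p ∈ pairsF N, (⟪(σ p.1 : Esp n), (σ p.2 : Esp n)⟫ : ℝ) ^ e p.1 p.2) *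
                (pairEnergy n N J σ) ^ m)) := by
      intro σ
      rw [Finset.mul_sum]
      refine Finset.sum_congr rfl fun m _ => ?_
      rw [mono_zero]
      field_simp
    rw [integral_congr_ae (Filter.Eventually.of_forall hpt)]
    rw [integral_finset_sum _ (fun m _ => (integrable_cont hn (fun σ => ((Nat.factorial m : ℝ))⁻¹ *
              (Mono n N (fun _ _ => 0) σ *
                ((∏ p ∈ pairsF N, (⟪(σ p.1 : Esp n), (σ p.2 : Esp n)⟫ : ℝ) ^ e p.1 p.2) *
                  (pairEnergy n N J σ) ^ m)))
      (continuous_const.mul ((cont_mono _).mul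
        (cont_mono'.mul ((cont_energy J).pow m)))))) ]
    refine Finset.sum_nonneg fun m _ => ?_
    rw [integral_const_mul]
    refine mul_nonneg (by positivity) ?_
    exact claimK hn J hJ (pairsF N) (fun p => e p.1 p.2) m (fun _ _ => 0)
  -- dominated convergence
  have h2 : Filter.Tendsto (fun M : ℕ => ∫ σ : Fin N → Sph n,
      (∏ p ∈ pairsF N, (⟪(σ p.1 : Esp n), (σ p.2 : Esp n)⟫ : ℝ) ^ e p.1 p.2) *
        (∑ m ∈ Finset.range M, (pairEnergy n N J σ) ^ m / (Nat.factorial m))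
        ∂spinMeasure n N) Filter.atTop
      (nhds (∫ σ : Fin N → Sph n,
        (∏ p ∈ pairsF N, (⟪(σ p.1 : Esp n), (σ p.2 : Esp n)⟫ : ℝ) ^ e p.1 p.2) *
          Real.exp (pairEnergy n N J σ) ∂spinMeasure n N)) := by
    refine tendsto_integral_of_dominated_convergence (fun _ => Real.exp C)
      (fun M => (cont_mono'.mul (continuous_finset_sum _ fun m _ =>
        (((cont_energy J).pow m).div_const _))).aestronglyMeasurable)
      (integrable_const _) (fun M => Filter.Eventually.of_forall fun σ => ?_)
      (Filter.Eventually.of_forall fun σ => ?_)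
    · rw [Real.norm_eq_abs, abs_mul]
      have hS : |∑ m ∈ Finset.range M, (pairEnergy n N J σ) ^ m / (Nat.factorial m)|
          ≤ Real.exp C := by
        refine (Finset.abs_sum_le_sum_abs _ _).trans ?_
        have : ∀ m : ℕ, |(pairEnergy n N J σ) ^ m / (Nat.factorial m : ℝ)|
            = |pairEnergy n N J σ| ^ m / (Nat.factorial m : ℝ) := by
          intro m
          rw [abs_div, abs_pow, Nat.abs_cast]
        rw [Finset.sum_congr rfl fun m _ => this m]
        refine (Real.sum_le_exp_of_nonneg (abs_nonneg _) M).trans ?_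
        exact Real.exp_le_exp.2 (habsP σ)
      calc |∏ p ∈ pairsF N, (⟪(σ p.1 : Esp n), (σ p.2 : Esp n)⟫ : ℝ) ^ e p.1 p.2| *
            |∑ m ∈ Finset.range M, (pairEnergy n N J σ) ^ m / (Nat.factorial m)|
          ≤ 1 * Real.exp C := by
            exact mul_le_mul (habsmono σ) hS (abs_nonneg _) zero_le_one
        _ = Real.exp C := one_mul _
    · refine Filter.Tendsto.const_mul _ ?_
      have := (NormedSpace.expSeries_div_hasSum_exp (pairEnergy n N J σ)).tendsto_sum_nat
      rwa [← Real.exp_eq_exp_ℝ] at this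
  exact ge_of_tendsto h2 (Filter.Eventually.of_forall h1)

end Spin4
/-- First Griffiths inequality with ferromagnetic interaction:
if `f ∈ 𝓔` and `J_{ij} ≥ 0`, then
`∫ f(σ) exp(∑_{i<j} J_{ij} σ_i·σ_j) dσ₁ ⋯ dσ_N ≥ 0`. -/
theorem first_griffiths_ferromagnetic (n N : ℕ) (hn : 2 ≤ n) (hN : 1 ≤ N)
    (J : Fin N → Fin N → ℝ) (hJ : ∀ i j, 0 ≤ J i j)
    (f : (Fin N → Metric.sphere (0 : EuclideanSpace ℝ (Fin n)) 1) → ℝ)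
    (hf : InCone n N f) :
    0 ≤ ∫ σ, f σ *
        Real.exp (∑ p ∈ Finset.univ.filter (fun p : Fin N × Fin N => p.1 < p.2),
          J p.1 p.2 *
            (⟪(σ p.1 : EuclideanSpace ℝ (Fin n)), (σ p.2 : EuclideanSpace ℝ (Fin n))⟫ : ℝ))
      ∂(spinMeasure n N) := by
  have hn1 : 1 ≤ n := le_trans (by norm_num) hn
  obtain ⟨K, c, e, hc, hfeq⟩ := hf
  have hpt : ∀ σ : Fin N → Metric.sphere (0 : EuclideanSpace ℝ (Fin n)) 1,
      f σ * Real.exp (∑ p ∈ Finset.univ.filter (fun p : Fin N × Fin N => p.1 < p.2),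
          J p.1 p.2 *
            (⟪(σ p.1 : EuclideanSpace ℝ (Fin n)), (σ p.2 : EuclideanSpace ℝ (Fin n))⟫ : ℝ))
      = ∑ k : Fin K, c k *
          ((∏ p ∈ pairsF N,
              (⟪(σ p.1 : EuclideanSpace ℝ (Fin n)), (σ p.2 : EuclideanSpace ℝ (Fin n))⟫ : ℝ)
                ^ e k p.1 p.2) *
            Real.exp (pairEnergy n N J σ)) := by
    intro σ
    rw [hfeq σ, Finset.sum_mul]
    exact Finset.sum_congr rfl fun k _ => by rw [mul_assoc]; rfl
  rw [integral_congr_ae (Filter.Eventually.of_forall hpt)]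
  rw [integral_finset_sum]
  · refine Finset.sum_nonneg fun k _ => ?_
    rw [integral_const_mul]
    exact mul_nonneg (hc k) (lemL hn1 J hJ (e k))
  · intro k _
    refine integrable_cont hn1 _ ?_
    refine continuous_const.mul (Continuous.mul ?_ ?_)
    · exact continuous_finset_prod _ fun p _ => (cont_inner p.1 p.2).pow _
    · exact Real.continuous_exp.comp (cont_energy J)
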